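/- Let Δ₁ ⊆ ℝ^{n₁} and Δ₂ ⊆ ℝ^{n₂} be full-dimensional convex polytopes containing the origin, and Δ = Δ₁ ⊕ Δ₂. For u = (u₁, u₂) ∈ C(Δ) with u_i ∈ C(Δ_i), the weight satisfies w_Δ(u) = w_{Δ₁}(u₁) + w_{Δ₂}(u₂). -/

import Mathlib

open Set

/-- A (convex) polytope: the convex hull of a finite set of points. -/
def IsPolytope {V : Type*} [AddCommGroup V] [Module ℝ V] (P : Set V) : Prop :=
  ∃ s : Finset V, P = convexHull ℝ (s : Set V)

/-- A face of `P`: the intersection of `P` with a supporting hyperplane,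
together with `P` itself and the empty set. -/
def IsFaceOf {V : Type*} [AddCommGroup V] [Module ℝ V] (σ P : Set V) : Prop :=
  σ = P ∨ σ = ∅ ∨
    ∃ (l : V →ₗ[ℝ] ℝ) (c : ℝ), l ≠ 0 ∧ (∀ x ∈ P, l x ≤ c) ∧ σ = {x ∈ P | l x = c}

/-- The direct sum of `A ⊆ ℝ^{n₁}` and `B ⊆ ℝ^{n₂}`: the convex hull of
`(A × {0}) ∪ ({0} × B)` in `ℝ^{n₁+n₂}`. -/
def dSum {n₁ n₂ : ℕ} (A : Set (Fin n₁ → ℝ)) (B : Set (Fin n₂ → ℝ)) :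
    Set ((Fin n₁ → ℝ) × (Fin n₂ → ℝ)) :=
  convexHull ℝ ((fun x => (x, 0)) '' A ∪ (fun y => ((0 : Fin n₁ → ℝ), y)) '' B)

open Pointwise

/-- The cone over a set: `C(S) = { ρ • x : ρ ≥ 0, x ∈ S }`. -/
def rcone {V : Type*} [AddCommGroup V] [Module ℝ V] (S : Set V) : Set V :=
  {x | ∃ ρ : ℝ, 0 ≤ ρ ∧ ∃ s ∈ S, x = ρ • s}

/-- The weight of `u` with respect to `Δ`: `w_Δ(u) = inf { ρ ≥ 0 : u ∈ ρ Δ }`. -/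
noncomputable def wt {V : Type*} [AddCommGroup V] [Module ℝ V] (Δ : Set V) (u : V) : ℝ :=
  sInf {ρ : ℝ | 0 ≤ ρ ∧ u ∈ ρ • Δ}

/-- For a compact `Δ`, the weight is nonnegative and is attained. -/
lemma wt_spec {V : Type*} [NormedAddCommGroup V] [NormedSpace ℝ V] (Δ : Set V)
    (hC : IsCompact Δ) (u : V) (hu : u ∈ rcone Δ) :
    0 ≤ wt Δ u ∧ u ∈ wt Δ u • Δ := by
  set S : Set ℝ := {ρ : ℝ | 0 ≤ ρ ∧ u ∈ ρ • Δ} with hS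
  obtain ⟨M, hM0, d₀, hd₀, hud₀⟩ := hu
  have hMS : M ∈ S := ⟨hM0, ⟨d₀, hd₀, hud₀.symm⟩⟩
  have hbdd : BddBelow S := ⟨0, fun ρ hρ => hρ.1⟩
  set K : Set (ℝ × V) := (Icc 0 M ×ˢ Δ) ∩ {p | p.1 • p.2 = u} with hK
  have hKc : IsCompact K :=
    ((isCompact_Icc).prod hC).inter_right
      (isClosed_eq (continuous_fst.smul continuous_snd) continuous_const)
  have hKne : K.Nonempty := ⟨(M, d₀), ⟨⟨hM0, le_refl M⟩, hd₀⟩, hud₀.symm⟩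
  have hTc : IsCompact (Prod.fst '' K) := hKc.image continuous_fst
  obtain ⟨m, hmT, hmin⟩ := hTc.exists_isLeast (hKne.image _)
  obtain ⟨⟨m', d⟩, ⟨⟨⟨hm0, hmM⟩, hdΔ⟩, hmd⟩, rfl⟩ := hmT
  have hmS : m' ∈ S := ⟨hm0, ⟨d, hdΔ, hmd⟩⟩
  have hlow : ∀ ρ ∈ S, m' ≤ ρ := by
    intro ρ hρ
    by_cases h : ρ ≤ M
    · obtain ⟨e, heΔ, hre⟩ := hρ.2
      exact hmin ⟨(ρ, e), ⟨⟨⟨hρ.1, h⟩, heΔ⟩, hre⟩, rfl⟩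
    · exact (hmin ⟨(M, d₀), ⟨⟨⟨hM0, le_refl M⟩, hd₀⟩, hud₀.symm⟩, rfl⟩).trans (le_of_not_ge h)
  have : wt Δ u = m' := le_antisymm (csInf_le hbdd hmS) (le_csInf ⟨M, hMS⟩ hlow)
  rw [this]
  exact ⟨hm0, ⟨d, hdΔ, hmd⟩⟩

theorem stmt5 {n₁ n₂ : ℕ} (Δ₁ : Set (Fin n₁ → ℝ)) (Δ₂ : Set (Fin n₂ → ℝ))
    (h₁ : IsPolytope Δ₁) (h₂ : IsPolytope Δ₂)
    (h0₁ : (0 : Fin n₁ → ℝ) ∈ Δ₁) (h0₂ : (0 : Fin n₂ → ℝ) ∈ Δ₂)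
    (hfull₁ : affineSpan ℝ Δ₁ = ⊤) (hfull₂ : affineSpan ℝ Δ₂ = ⊤)
    (u₁ : Fin n₁ → ℝ) (u₂ : Fin n₂ → ℝ)
    (hu₁ : u₁ ∈ rcone Δ₁) (hu₂ : u₂ ∈ rcone Δ₂)
    (hu : (u₁, u₂) ∈ rcone (dSum Δ₁ Δ₂)) :
    wt (dSum Δ₁ Δ₂) (u₁, u₂) = wt Δ₁ u₁ + wt Δ₂ u₂ := by
  obtain ⟨s₁, hs₁⟩ := h₁
  obtain ⟨s₂, hs₂⟩ := h₂
  have hC₁ : IsCompact Δ₁ := hs₁ ▸ s₁.finite_toSet.isCompact_convexHull ℝ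
  have hC₂ : IsCompact Δ₂ := hs₂ ▸ s₂.finite_toSet.isCompact_convexHull ℝ
  have hconv₁ : Convex ℝ Δ₁ := hs₁ ▸ convex_convexHull ℝ _
  have hconv₂ : Convex ℝ Δ₂ := hs₂ ▸ convex_convexHull ℝ _
  obtain ⟨hw₁0, hw₁mem⟩ := wt_spec Δ₁ hC₁ u₁ hu₁
  obtain ⟨hw₂0, hw₂mem⟩ := wt_spec Δ₂ hC₂ u₂ hu₂
  obtain ⟨x, hxΔ, hx⟩ := hw₁mem
  obtain ⟨y, hyΔ, hy⟩ := hw₂mem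
  set w₁ := wt Δ₁ u₁
  set w₂ := wt Δ₂ u₂
  -- the two pieces of the direct sum
  set A : Set ((Fin n₁ → ℝ) × (Fin n₂ → ℝ)) := (fun x => (x, 0)) '' Δ₁ with hA
  set B : Set ((Fin n₁ → ℝ) × (Fin n₂ → ℝ)) := (fun y => ((0 : Fin n₁ → ℝ), y)) '' Δ₂ with hB
  have hAconv : Convex ℝ A := hconv₁.linear_image (LinearMap.inl ℝ _ _)
  have hBconv : Convex ℝ B := hconv₂.linear_image (LinearMap.inr ℝ _ _)
  have hjoin : dSum Δ₁ Δ₂ = convexJoin ℝ A B :=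
    Convex.convexHull_union hAconv hBconv ⟨_, ⟨0, h0₁, rfl⟩⟩ ⟨_, ⟨0, h0₂, rfl⟩⟩
  have hDconv : Convex ℝ (dSum Δ₁ Δ₂) := convex_convexHull ℝ _
  have hxD : ((x, 0) : (Fin n₁ → ℝ) × (Fin n₂ → ℝ)) ∈ dSum Δ₁ Δ₂ :=
    subset_convexHull ℝ _ (Or.inl ⟨x, hxΔ, rfl⟩)
  have hyD : (((0 : Fin n₁ → ℝ), y) : (Fin n₁ → ℝ) × (Fin n₂ → ℝ)) ∈ dSum Δ₁ Δ₂ :=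
    subset_convexHull ℝ _ (Or.inr ⟨y, hyΔ, rfl⟩)
  have hbdd₁ : BddBelow {ρ : ℝ | 0 ≤ ρ ∧ u₁ ∈ ρ • Δ₁} := ⟨0, fun ρ hρ => hρ.1⟩
  have hbdd₂ : BddBelow {ρ : ℝ | 0 ≤ ρ ∧ u₂ ∈ ρ • Δ₂} := ⟨0, fun ρ hρ => hρ.1⟩
  have hbddD : BddBelow {ρ : ℝ | 0 ≤ ρ ∧ (u₁, u₂) ∈ ρ • dSum Δ₁ Δ₂} := ⟨0, fun ρ hρ => hρ.1⟩
  have hneD : {ρ : ℝ | 0 ≤ ρ ∧ (u₁, u₂) ∈ ρ • dSum Δ₁ Δ₂}.Nonempty := by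
    obtain ⟨M, hM0, d₀, hd₀, hud₀⟩ := hu
    exact ⟨M, hM0, ⟨d₀, hd₀, hud₀.symm⟩⟩
  apply le_antisymm
  · -- wt (dSum) ≤ w₁ + w₂
    apply csInf_le hbddD
    refine ⟨by positivity, ?_⟩
    rcases eq_or_lt_of_le (by positivity : (0:ℝ) ≤ w₁ + w₂) with h0 | hpos
    · have hw1 : w₁ = 0 := by linarith
      have hw2 : w₂ = 0 := by linarith
      have hu1 : u₁ = 0 := by rw [← hx]; simp [hw1]
      have hu2 : u₂ = 0 := by rw [← hy]; simp [hw2]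
      rw [hu1, hu2, ← h0]
      exact ⟨(x, 0), hxD, by simp; rfl⟩
    · set s := w₁ + w₂
      set z := (w₁ / s) • ((x, 0) : (Fin n₁ → ℝ) × (Fin n₂ → ℝ))
        + (w₂ / s) • (((0 : Fin n₁ → ℝ), y) : (Fin n₁ → ℝ) × (Fin n₂ → ℝ)) with hz
      have hzD : z ∈ dSum Δ₁ Δ₂ := by
        apply hDconv hxD hyD (by positivity) (by positivity)
        field_simp
        rfl
      refine ⟨z, hzD, ?_⟩
      have hs : s ≠ 0 := ne_of_gt hpos
      have h1 : s * (w₁ / s) = w₁ := by field_simp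
      have h2 : s * (w₂ / s) = w₂ := by field_simp
      show s • z = (u₁, u₂)
      rw [hz, smul_add, smul_smul, smul_smul, h1, h2, Prod.ext_iff]
      constructor
      · simpa using hx
      · simpa using hy
  · -- w₁ + w₂ ≤ wt (dSum)
    apply le_csInf hneD
    rintro ρ ⟨hρ0, z, hzD, hzρ⟩
    rw [hjoin, mem_convexJoin] at hzD
    obtain ⟨a, ⟨x', hx'Δ, rfl⟩, b, ⟨y', hy'Δ, rfl⟩, lam, mu, hl0, hm0, hlm, hzeq⟩ := hzD
    rw [← hzeq] at hzρ
    simp only [smul_add, smul_smul, Prod.smul_mk, smul_zero, Prod.mk_add_mk, add_zero,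
      zero_add, Prod.mk.injEq] at hzρ
    have hz1 : (ρ * lam) • x' = u₁ := hzρ.1
    have hz2 : (ρ * mu) • y' = u₂ := hzρ.2
    have hw1le : w₁ ≤ ρ * lam :=
      csInf_le hbdd₁ ⟨mul_nonneg hρ0 hl0, ⟨x', hx'Δ, hz1⟩⟩
    have hw2le : w₂ ≤ ρ * mu :=
      csInf_le hbdd₂ ⟨mul_nonneg hρ0 hm0, ⟨y', hy'Δ, hz2⟩⟩
    nlinarith [hw1le, hw2le, hlm]
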